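/- Let 0 < η < 1, set b = η − 1 and g = (2 − η)^(3η−2), and define f̃(x) = (x − b)^(η−1) − g·(x − b)^(1−2η). Then for every x with 0 < x < 1: f̃(x) > 0 if η < 2/3; f̃(x) < 0 if η > 2/3; and f̃(x) = 0 if η = 2/3. In particular the fractional interior metric is regular at x = 0 and mimics a gravastar for η < 2/3 and a regular black hole for η > 2/3. -/
import Mathlib

/-- Sign of the fractional interior metric
`f̃(x) = (x − b)^(η−1) − g(x − b)^(1−2η)` with `b = η − 1`, `g = (2 − η)^(3η−2)`:
inside the horizon (`0 < x < 1`) it is positive for `η < 2/3` (gravastar), negative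
for `η > 2/3` (regular black hole), and zero for `η = 2/3`. -/
theorem interior_metric_sign (η : ℝ) (hη0 : 0 < η) (hη1 : η < 1) :
    ∀ x : ℝ, 0 < x → x < 1 →
      (η < 2 / 3 →
        0 < (x - (η - 1)) ^ (η - 1) - (2 - η) ^ (3 * η - 2) * (x - (η - 1)) ^ (1 - 2 * η)) ∧
      (2 / 3 < η →
        (x - (η - 1)) ^ (η - 1) - (2 - η) ^ (3 * η - 2) * (x - (η - 1)) ^ (1 - 2 * η) < 0) ∧
      (η = 2 / 3 →
        (x - (η - 1)) ^ (η - 1) - (2 - η) ^ (3 * η - 2) * (x - (η - 1)) ^ (1 - 2 * η) = 0) := by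
  intro x hx0 hx1
  set u := x - (η - 1) with hu
  have hupos : 0 < u := by simp only [hu]; linarith
  have hult : u < 2 - η := by simp only [hu]; linarith
  have key : u ^ (η - 1) = u ^ (3 * η - 2) * u ^ (1 - 2 * η) := by
    rw [← Real.rpow_add hupos]; ring_nf
  have hpow_pos : 0 < u ^ (1 - 2 * η) := Real.rpow_pos_of_pos hupos _
  refine ⟨?_, ?_, ?_⟩
  · intro h
    have he : 3 * η - 2 < 0 := by linarith
    have : (2 - η) ^ (3 * η - 2) < u ^ (3 * η - 2) :=
      Real.rpow_lt_rpow_of_neg hupos hult he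
    rw [key]
    nlinarith
  · intro h
    have he : 0 < 3 * η - 2 := by linarith
    have : u ^ (3 * η - 2) < (2 - η) ^ (3 * η - 2) :=
      Real.rpow_lt_rpow (le_of_lt hupos) hult he
    rw [key]
    nlinarith
  · intro h
    have he : 3 * η - 2 = 0 := by rw [h]; ring
    rw [key, he]
    simp
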